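/- arXiv:2602.00623 — 2 statements merged into one kernel-verified Lean document; each statement's English description precedes it below -/
import Mathlib

section
/- For all L, M ∈ 𝐋, the infimum defining d_ABW(L,M) is attained (i.e., there exists O ∈ 𝐎 with ‖L − MO‖_F = d_ABW(L,M)), and moreover d_ABW(L,M)² = ‖L‖_F² + ‖M‖_F² − 2·∑_{t=1}^{T} tr( ((MᵀL)_{t,t}ᵀ (MᵀL)_{t,t})^{1/2} ), where (·)^{1/2} denotes the positive semidefinite square root of a positive semidefinite matrix (so the t-th summand is the sum of the singular values of (MᵀL)_{t,t}). -/
open Matrix Filter Topology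

/-- Square matrices of size `dT × dT`, indexed by blocks: index `(t, i)` is
row/column `i` within block `t`. -/
abbrev Mat (d T : ℕ) := Matrix (Fin T × Fin d) (Fin T × Fin d) ℝ

/-- The `t`-th diagonal `d × d` block of a `dT × dT` matrix. -/
def blk {d T : ℕ} (A : Mat d T) (t : Fin T) : Matrix (Fin d) (Fin d) ℝ :=
  fun i j => A (t, i) (t, j)

/-- The `t`-th block column of a `dT × dT` matrix, a `dT × d` matrix. -/
def colBlk {d T : ℕ} (A : Mat d T) (t : Fin T) : Matrix (Fin T × Fin d) (Fin d) ℝ :=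
  fun p j => A p (t, j)

/-- Membership in `𝐋`: block lower triangular matrices. -/
def memL {d T : ℕ} (A : Mat d T) : Prop :=
  ∀ (t s : Fin T) (i j : Fin d), t < s → A (t, i) (s, j) = 0

/-- Membership in `𝐎`: block diagonal matrices with orthogonal `d × d` diagonal blocks
(equivalently: block diagonal and orthogonal). -/
def memO {d T : ℕ} (O : Mat d T) : Prop :=
  (∀ (t s : Fin T) (i j : Fin d), t ≠ s → O (t, i) (s, j) = 0) ∧ Oᵀ * O = 1

/-- The Frobenius norm of a real matrix. -/
noncomputable def frobNorm {m n : Type*} [Fintype m] [Fintype n] (A : Matrix m n ℝ) : ℝ :=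
  Real.sqrt (∑ i, ∑ j, (A i j) ^ 2)

/-- The Frobenius inner product of two real matrices. -/
noncomputable def frobInner {m n : Type*} [Fintype m] [Fintype n] (A B : Matrix m n ℝ) : ℝ :=
  ∑ i, ∑ j, A i j * B i j

/-- The adapted Bures–Wasserstein distance `d_ABW(L, M) = inf_{O ∈ 𝐎} ‖L - M O‖_F`. -/
noncomputable def dABW {d T : ℕ} (L M : Mat d T) : ℝ :=
  sInf {r : ℝ | ∃ O : Mat d T, memO O ∧ r = frobNorm (L - M * O)}

/-- The set `𝐎*(L, M)` of optimizers of `inf_{O ∈ 𝐎} ‖L - M O‖_F`. -/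
noncomputable def OStar {d T : ℕ} (L M : Mat d T) : Set (Mat d T) :=
  {O | memO O ∧ frobNorm (L - M * O) = dABW L M}

/-- The set `𝐕(L) = {M P - L : M ∈ 𝐋, P ∈ 𝐎*(L, M)}`. -/
noncomputable def VSet {d T : ℕ} (L : Mat d T) : Set (Mat d T) :=
  {V | ∃ M P : Mat d T, memL M ∧ P ∈ OStar L M ∧ V = M * P - L}

/-- The set `𝒱(L) = {V ∈ 𝐋 : (Vᵀ L)_{t,t} is symmetric for all t}`. -/
def calV {d T : ℕ} (L : Mat d T) : Set (Mat d T) :=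
  {V | memL V ∧ ∀ t : Fin T, (blk (Vᵀ * L) t).IsSymm}

/-- The set `𝐋^reg = {L ∈ 𝐋 : (Lᵀ L)_{t,t} is positive definite for all t}`. -/
def LReg {d T : ℕ} : Set (Mat d T) :=
  {L | memL L ∧ ∀ t : Fin T, (blk (Lᵀ * L) t).PosDef}

/-- The sum of the singular values of a real square matrix `A`,
i.e. the trace of the positive semidefinite square root of `Aᵀ A`. -/
noncomputable def svSum {n : ℕ} (A : Matrix (Fin n) (Fin n) ℝ) : ℝ :=
  ((Matrix.posSemidef_conjTranspose_mul_self A).1.eigenvectorUnitary.1 *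
    diagonal ((RCLike.ofReal : ℝ → ℝ) ∘ (√·) ∘ (Matrix.posSemidef_conjTranspose_mul_self A).1.eigenvalues) *
    (star (Matrix.posSemidef_conjTranspose_mul_self A).1.eigenvectorUnitary : Matrix (Fin n) (Fin n) ℝ)).trace

/-- The operator norm of a real matrix: the supremum of the euclidean norm `‖A x‖₂`
over the euclidean unit ball. -/
noncomputable def opNorm {m n : Type*} [Fintype m] [Fintype n] (A : Matrix m n ℝ) : ℝ :=
  sSup {r : ℝ | ∃ x : n → ℝ, (∑ j, (x j) ^ 2) ≤ 1 ∧ r = Real.sqrt (∑ i, (A.mulVec x i) ^ 2)}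

section AuxProcrustes

set_option linter.unusedSectionVars false

variable {n : Type*} [Fintype n] [DecidableEq n]

open scoped MatrixOrder

private lemma trace_mul_stdBasis (S : Matrix n n ℝ) (i j : n) :
    (S * Matrix.single i j (1:ℝ)).trace = S j i := by
  simp [Matrix.trace, Matrix.diag, mul_apply, Matrix.single, ite_and,
    Finset.sum_ite_eq, Finset.sum_ite_eq']

private lemma symm_of_max (S : Matrix n n ℝ)
    (hmax : ∀ R : Matrix n n ℝ, Rᵀ * R = 1 → (S * R).trace ≤ S.trace) :
    Sᵀ = S := by
  ext j i
  rw [transpose_apply]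
  rcases eq_or_ne i j with rfl | hij
  · rfl
  set P : Matrix n n ℝ := Matrix.single i i 1 + Matrix.single j j 1 with hP
  set K : Matrix n n ℝ := Matrix.single i j 1 - Matrix.single j i 1 with hK
  have hstdT : ∀ (p q : n), (Matrix.single p q (1:ℝ))ᵀ = Matrix.single q p 1 := by
    intro p q
    ext x y
    simp [Matrix.single, transpose_apply, and_comm]
  have hPt : Pᵀ = P := by
    simp [hP, transpose_add, hstdT]
  have hKt : Kᵀ = -K := by
    simp only [hK, transpose_sub, hstdT]
    abel
  have hPP : P * P = P := by
    simp [hP, add_mul, mul_add, single_mul_single_same, single_mul_single_of_ne, hij,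
      hij.symm]
  have hPK : P * K = K := by
    simp [hP, hK, add_mul, mul_add, mul_sub, single_mul_single_same,
      single_mul_single_of_ne, hij, hij.symm]
  have hKP : K * P = K := by
    simp only [hP, hK, add_mul, sub_mul, mul_add, single_mul_single_same,
      single_mul_single_of_ne, hij, hij.symm, Ne, not_false_iff, one_mul,
      add_zero, zero_add, sub_zero, zero_sub, mul_one]
    abel
  have hKK : K * K = -P := by
    simp [hP, hK, sub_mul, mul_sub, single_mul_single_same, single_mul_single_of_ne, hij,
      hij.symm]
    abel
  set b : ℝ := S j i - S i j with hb
  set a : ℝ := S i i + S j j with ha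
  have key : ∀ θ : ℝ, (Real.cos θ - 1) * a + Real.sin θ * b ≤ 0 := by
    intro θ
    obtain ⟨c, hc⟩ : ∃ c : ℝ, c = Real.cos θ - 1 := ⟨_, rfl⟩
    obtain ⟨s, hs⟩ : ∃ s : ℝ, s = Real.sin θ := ⟨_, rfl⟩
    rw [← hc, ← hs]
    set R : Matrix n n ℝ := 1 + c • P + s • K with hR
    have hRorth : Rᵀ * R = 1 := by
      have h2 : c * c + 2 * c + s * s = 0 := by
        rw [hc, hs]
        nlinarith [Real.sin_sq_add_cos_sq θ]
      have expand : Rᵀ * R = 1 + (c * c + 2 * c + s * s) • P := by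
        rw [hR]
        simp only [transpose_add, transpose_smul, transpose_one, hPt, hKt, smul_neg]
        simp only [add_mul, mul_add, one_mul, mul_one, smul_mul_assoc, mul_smul_comm,
          hPP, hPK, hKP, hKK, smul_smul, smul_neg, neg_smul, smul_add, smul_sub,
          neg_mul, mul_neg, neg_neg]
        module
      rw [expand, h2, zero_smul, add_zero]
    have htr : (S * R).trace = S.trace + (c * a + s * b) := by
      rw [hR]
      simp only [mul_add, mul_one, trace_add, trace_smul, mul_smul_comm]
      rw [hP, hK, mul_add, mul_sub, trace_add, trace_sub, trace_mul_stdBasis,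
        trace_mul_stdBasis, trace_mul_stdBasis, trace_mul_stdBasis]
      simp only [smul_eq_mul, ha, hb]
      ring
    have := hmax R hRorth
    rw [htr] at this
    linarith
  have h0 : (fun θ : ℝ => (Real.cos θ - 1) * a + Real.sin θ * b) 0 = 0 := by simp
  have hmax0 : IsLocalMax (fun θ : ℝ => (Real.cos θ - 1) * a + Real.sin θ * b) 0 := by
    apply Filter.Eventually.of_forall
    intro θ
    rw [h0]; exact key θ
  have hderiv : HasDerivAt (fun θ : ℝ => (Real.cos θ - 1) * a + Real.sin θ * b) b 0 := by
    have h1 := ((Real.hasDerivAt_cos 0).sub_const 1).mul_const a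
    have h2 := (Real.hasDerivAt_sin 0).mul_const b
    have := h1.add h2
    exact this.congr_deriv (by simp)
  have : b = 0 := by
    have := hmax0.deriv_eq_zero
    rwa [hderiv.deriv] at this
  rw [hb] at this
  linarith

private lemma exists_max_orth (A : Matrix n n ℝ) :
    ∃ Q : Matrix n n ℝ, Qᵀ * Q = 1 ∧
      ∀ R : Matrix n n ℝ, Rᵀ * R = 1 → (A * R).trace ≤ (A * Q).trace := by
  have hcl : IsClosed {Q : Matrix n n ℝ | Qᵀ * Q = 1} := by
    have hcont : Continuous fun Q : Matrix n n ℝ => Qᵀ * Q :=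
      (continuous_id.matrix_transpose).matrix_mul continuous_id
    exact isClosed_eq hcont continuous_const
  have hsub : {Q : Matrix n n ℝ | Qᵀ * Q = 1} ⊆
      Set.univ.pi fun _ : n => Set.univ.pi fun _ : n => Set.Icc (-1 : ℝ) 1 := by
    intro Q hQ
    intro i _ j _
    have h1 : (Qᵀ * Q) j j = 1 := by rw [hQ]; simp
    have h2 : ∑ k, Q k j * Q k j = 1 := by
      rw [← h1]; simp [mul_apply, transpose_apply]
    have h3 : Q i j * Q i j ≤ 1 := by
      rw [← h2]
      exact Finset.single_le_sum (fun k _ => mul_self_nonneg (Q k j)) (Finset.mem_univ i)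
    constructor <;> nlinarith
  have hcomp : IsCompact {Q : Matrix n n ℝ | Qᵀ * Q = 1} := by
    refine IsCompact.of_isClosed_subset ?_ hcl hsub
    exact isCompact_univ_pi fun _ => isCompact_univ_pi fun _ => isCompact_Icc
  have hne : {Q : Matrix n n ℝ | Qᵀ * Q = 1}.Nonempty := ⟨1, by simp⟩
  have hcont : Continuous fun Q : Matrix n n ℝ => (A * Q).trace :=
    (continuous_const.matrix_mul continuous_id).matrix_trace
  obtain ⟨Q, hQ, hmax⟩ := hcomp.exists_isMaxOn hne hcont.continuousOn
  exact ⟨Q, hQ, fun R hR => hmax hR⟩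

private lemma trace_max_eq (A Q : Matrix n n ℝ) (hQ : Qᵀ * Q = 1)
    (hmax : ∀ R : Matrix n n ℝ, Rᵀ * R = 1 → (A * R).trace ≤ (A * Q).trace) :
    (A * Q).trace = (CFC.sqrt (Aᴴ * A)).trace := by
  have hQQt : Q * Qᵀ = 1 := mul_eq_one_comm.mp hQ
  set S := A * Q with hSdef
  have hmaxS : ∀ R : Matrix n n ℝ, Rᵀ * R = 1 → (S * R).trace ≤ S.trace := by
    intro R hR
    have horth : (Q * R)ᵀ * (Q * R) = 1 := by
      rw [transpose_mul, mul_assoc, ← mul_assoc Qᵀ, hQ, one_mul, hR]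
    have := hmax (Q * R) horth
    rwa [← mul_assoc, ← hSdef] at this
  have hSymm : Sᵀ = S := symm_of_max S hmaxS
  have hHerm : S.IsHermitian := by
    rw [Matrix.IsHermitian, conjTranspose_eq_transpose_of_trivial, hSymm]
  set U : Matrix n n ℝ := (hHerm.eigenvectorUnitary : Matrix n n ℝ) with hU
  set lam : n → ℝ := hHerm.eigenvalues with hlam
  have hUU : Uᴴ * U = 1 := by
    rw [hU, ← Matrix.star_eq_conjTranspose]
    exact Unitary.coe_star_mul_self hHerm.eigenvectorUnitary
  have hUUt : U * Uᴴ = 1 := by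
    rw [hU, ← Matrix.star_eq_conjTranspose]
    exact Unitary.coe_mul_star_self hHerm.eigenvectorUnitary
  have hSpec : S = U * diagonal lam * Uᴴ := by
    have := hHerm.spectral_theorem
    rwa [show (RCLike.ofReal ∘ hHerm.eigenvalues : n → ℝ) = lam by
      ext i; simp [RCLike.ofReal, hlam], Unitary.conjStarAlgAut_apply, Matrix.star_eq_conjTranspose] at this
  have hconj : ∀ f g : n → ℝ, (U * diagonal f * Uᴴ) * (U * diagonal g * Uᴴ)
      = U * diagonal (fun i => f i * g i) * Uᴴ := by
    intro f g
    calc (U * diagonal f * Uᴴ) * (U * diagonal g * Uᴴ)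
        = U * diagonal f * (Uᴴ * U) * diagonal g * Uᴴ := by
          simp only [Matrix.mul_assoc]
      _ = U * diagonal (fun i => f i * g i) * Uᴴ := by
          rw [hUU, mul_one, Matrix.mul_assoc U, diagonal_mul_diagonal]
  have htraceconj : ∀ f : n → ℝ, (U * diagonal f * Uᴴ).trace = ∑ i, f i := by
    intro f
    rw [trace_mul_cycle, hUU, one_mul, trace_diagonal]
  set sgn : n → ℝ := fun i => if 0 ≤ lam i then 1 else -1 with hsgn
  set R := U * diagonal sgn * Uᴴ with hRdef
  have hRsymm : Rᴴ = R := by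
    rw [hRdef]
    simp only [conjTranspose_mul, conjTranspose_conjTranspose, diagonal_conjTranspose]
    have : star sgn = sgn := by
      ext i; simp [star]
    rw [this, Matrix.mul_assoc]
  have hRorth : Rᵀ * R = 1 := by
    have h1 : Rᴴ * R = 1 := by
      rw [hRsymm, hRdef, hconj]
      have : (fun i => sgn i * sgn i) = fun _ => (1:ℝ) := by
        ext i; by_cases h : 0 ≤ lam i <;> simp [hsgn, h]
      rw [this]
      simpa using hUUt
    rwa [← conjTranspose_eq_transpose_of_trivial]
  have htrSR : (S * R).trace = ∑ i, |lam i| := by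
    rw [hSpec, hRdef, hconj, htraceconj]
    apply Finset.sum_congr rfl
    intro i _
    by_cases h : 0 ≤ lam i
    · simp [hsgn, h, abs_of_nonneg h]
    · push_neg at h
      simp [hsgn, not_le.mpr h, abs_of_neg h]
  have htrS : S.trace = ∑ i, lam i := by rw [hSpec, htraceconj]
  have hts : S.trace = ∑ i, |lam i| := by
    have h1 : ∑ i, |lam i| ≤ S.trace := by rw [← htrSR]; exact hmaxS R hRorth
    have h2 : S.trace ≤ ∑ i, |lam i| := by
      rw [htrS]; exact Finset.sum_le_sum fun i _ => le_abs_self _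
    linarith
  set W := U * diagonal (fun i => |lam i|) * Uᴴ with hWdef
  have hWpsd : W.PosSemidef := by
    rw [hWdef]
    exact (posSemidef_diagonal_iff.mpr fun i => abs_nonneg _).mul_mul_conjTranspose_same U
  have hWsq : W ^ 2 = Sᴴ * S := by
    rw [pow_two, hWdef, hconj, hHerm.eq]
    conv_rhs => rw [hSpec]
    rw [hconj]
    have habs : (fun i => |lam i| * |lam i|) = fun i => lam i * lam i := by
      funext i; exact abs_mul_abs_self _
    rw [habs]
  have hWsqrt : W = CFC.sqrt (Sᴴ * S) :=
    ((CFC.sqrt_eq_iff _ _ (posSemidef_conjTranspose_mul_self S).nonneg hWpsd.nonneg).mpr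
      (by rw [← sq]; exact hWsq)).symm
  have htrW : W.trace = ∑ i, |lam i| := htraceconj _
  set G := CFC.sqrt (Aᴴ * A) with hGdef
  have hGpsd : G.PosSemidef := (CFC.sqrt_nonneg _).posSemidef
  have hGsq : G ^ 2 = Aᴴ * A := CFC.sq_sqrt _ (posSemidef_conjTranspose_mul_self A).nonneg
  have hQh : Qᴴ = Qᵀ := conjTranspose_eq_transpose_of_trivial Q
  have hW'psd : (Qᵀ * G * Q).PosSemidef := by
    have := hGpsd.conjTranspose_mul_mul_same Q
    rwa [hQh] at this
  have hW'sq : (Qᵀ * G * Q) ^ 2 = Sᴴ * S := by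
    have hAh : Sᴴ * S = Qᵀ * (Aᴴ * A) * Q := by
      rw [hSdef, conjTranspose_mul, hQh]
      simp only [Matrix.mul_assoc]
    rw [pow_two, hAh, ← hGsq, pow_two]
    calc Qᵀ * G * Q * (Qᵀ * G * Q) = Qᵀ * G * (Q * Qᵀ) * G * Q := by
          simp only [Matrix.mul_assoc]
      _ = Qᵀ * (G * G) * Q := by rw [hQQt, mul_one]; simp only [Matrix.mul_assoc]
  have hW' : Qᵀ * G * Q = CFC.sqrt (Sᴴ * S) :=
    ((CFC.sqrt_eq_iff _ _ (posSemidef_conjTranspose_mul_self S).nonneg hW'psd.nonneg).mpr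
      (by rw [← sq]; exact hW'sq)).symm
  have htrG : (Qᵀ * G * Q).trace = G.trace := by
    rw [trace_mul_cycle, hQQt, one_mul]
  calc S.trace = ∑ i, |lam i| := hts
    _ = W.trace := htrW.symm
    _ = (Qᵀ * G * Q).trace := by rw [hWsqrt, hW']
    _ = G.trace := htrG

private lemma svSum_eq {d : ℕ} (A : Matrix (Fin d) (Fin d) ℝ) :
    svSum A = (CFC.sqrt (Aᴴ * A)).trace := by
  rw [CFC.sqrt_eq_cfc, cfc_nnreal_eq_real _ (Aᴴ * A) (posSemidef_conjTranspose_mul_self A).nonneg,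
    (Matrix.posSemidef_conjTranspose_mul_self A).1.cfc_eq, IsHermitian.cfc,
    Unitary.conjStarAlgAut_apply, svSum]
  simp only [Real.sqrt]

private lemma procrustes {d : ℕ} (A : Matrix (Fin d) (Fin d) ℝ) :
    ∃ Q : Matrix (Fin d) (Fin d) ℝ, Qᵀ * Q = 1 ∧
      (∀ R : Matrix (Fin d) (Fin d) ℝ, Rᵀ * R = 1 → (A * R).trace ≤ (A * Q).trace) ∧
      (A * Q).trace = svSum A := by
  obtain ⟨Q, hQ, hmax⟩ := exists_max_orth A
  exact ⟨Q, hQ, hmax, (trace_max_eq A Q hQ hmax).trans (svSum_eq A).symm⟩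

end AuxProcrustes

section AuxFrob

variable {m' n' : Type*} [Fintype m'] [Fintype n']

private lemma frobNorm_sq (X : Matrix m' n' ℝ) : frobNorm X ^ 2 = frobInner X X := by
  rw [frobNorm, Real.sq_sqrt (by positivity)]
  simp [frobInner, pow_two]

private lemma frobInner_eq_trace (X Y : Matrix m' n' ℝ) : frobInner X Y = (Xᵀ * Y).trace := by
  rw [Matrix.trace]
  simp [Matrix.diag, mul_apply, transpose_apply, frobInner]
  exact Finset.sum_comm

private lemma frobInner_eq_trace' (X Y : Matrix m' n' ℝ) : frobInner X Y = (X * Yᵀ).trace := by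
  rw [Matrix.trace]
  simp [Matrix.diag, mul_apply, transpose_apply, frobInner]

private lemma frob_expand (X Y : Matrix m' n' ℝ) :
    frobNorm (X - Y) ^ 2 = frobNorm X ^ 2 + frobNorm Y ^ 2 - 2 * frobInner X Y := by
  rw [frobNorm_sq, frobNorm_sq, frobNorm_sq]
  unfold frobInner
  rw [show ∑ i, ∑ j, (X - Y) i j * (X - Y) i j
      = ∑ i, ∑ j, (X i j * X i j + Y i j * Y i j - 2 * (X i j * Y i j)) by
    refine Finset.sum_congr rfl fun i _ => Finset.sum_congr rfl fun j _ => ?_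
    simp [Matrix.sub_apply]; ring]
  simp [Finset.sum_add_distrib, Finset.sum_sub_distrib, Finset.mul_sum]

end AuxFrob

section AuxBlocks

variable {d T : ℕ}

private lemma blk_orth (O : Mat d T) (hO : memO O) (t : Fin T) :
    (blk O t)ᵀ * blk O t = 1 := by
  ext i j
  have h := congrFun (congrFun hO.2 (t, i)) (t, j)
  rw [mul_apply, Fintype.sum_prod_type] at h
  rw [Finset.sum_eq_single t (fun s _ hs => Finset.sum_eq_zero fun k _ => by
    rw [transpose_apply, hO.1 s t k i hs, zero_mul])
    (fun habs => absurd (Finset.mem_univ t) habs)] at h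
  rw [mul_apply]
  have hlhs : ∑ k, (blk O t)ᵀ i k * blk O t k j
      = ∑ k, (O.transpose (t, i)) (t, k) * O (t, k) (t, j) := by
    refine Finset.sum_congr rfl fun k _ => ?_
    simp [blk, transpose_apply]
  rw [hlhs, h]
  by_cases hij : i = j
  · subst hij; simp [Matrix.one_apply]
  · rw [Matrix.one_apply_ne (by simp [Prod.ext_iff, hij]), Matrix.one_apply_ne hij]

private lemma frobInner_blocks (A O : Mat d T)
    (hbd : ∀ (t s : Fin T) (i j : Fin d), t ≠ s → O (t, i) (s, j) = 0) :
    frobInner A O = ∑ t, frobInner (blk A t) (blk O t) := by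
  rw [frobInner, Fintype.sum_prod_type]
  refine Finset.sum_congr rfl fun t _ => ?_
  rw [frobInner]
  refine Finset.sum_congr rfl fun i _ => ?_
  rw [Fintype.sum_prod_type]
  rw [Finset.sum_eq_single t (fun s _ hs => Finset.sum_eq_zero fun j _ => by
    rw [hbd t s i j (fun hc => hs hc.symm), mul_zero])
    (fun habs => absurd (Finset.mem_univ t) habs)]
  rfl

/-- Assemble a block-diagonal matrix from diagonal blocks. -/
private def assemble (P : Fin T → Matrix (Fin d) (Fin d) ℝ) : Mat d T :=
  fun p q => if h : p.1 = q.1 then P p.1 p.2 q.2 else 0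

private lemma assemble_blk (P : Fin T → Matrix (Fin d) (Fin d) ℝ) (t : Fin T) :
    blk (assemble P) t = P t := by
  ext i j
  simp [assemble, blk]

private lemma assemble_offdiag (P : Fin T → Matrix (Fin d) (Fin d) ℝ)
    (t s : Fin T) (i j : Fin d) (h : t ≠ s) : assemble P (t, i) (s, j) = 0 := by
  simp [assemble, h]

private lemma assemble_memO (P : Fin T → Matrix (Fin d) (Fin d) ℝ)
    (hP : ∀ t, (P t)ᵀ * P t = 1) : memO (assemble P) := by
  refine ⟨fun t s i j h => assemble_offdiag P t s i j h, ?_⟩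
  ext ⟨t, i⟩ ⟨s, j⟩
  rw [mul_apply, Fintype.sum_prod_type]
  by_cases hts : t = s
  · subst hts
    rw [Finset.sum_eq_single t (fun u _ hu => Finset.sum_eq_zero fun k _ => by
      rw [transpose_apply, assemble_offdiag P u t k i hu, zero_mul])
      (fun habs => absurd (Finset.mem_univ t) habs)]
    have h := congrFun (congrFun (hP t) i) j
    rw [mul_apply] at h
    have hlhs : ∑ k, (assemble P)ᵀ (t, i) (t, k) * assemble P (t, k) (t, j)
        = ∑ k, (P t)ᵀ i k * P t k j := by
      refine Finset.sum_congr rfl fun k _ => ?_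
      simp [assemble, transpose_apply]
    rw [hlhs, h]
    by_cases hij : i = j
    · subst hij; simp [Matrix.one_apply]
    · rw [Matrix.one_apply_ne hij, Matrix.one_apply_ne (by simp [Prod.ext_iff, hij])]
  · rw [Matrix.one_apply_ne (by simp [Prod.ext_iff, hts])]
    apply Finset.sum_eq_zero
    intro u _
    apply Finset.sum_eq_zero
    intro k _
    by_cases hut : u = t
    · subst hut
      rw [assemble_offdiag P u s k j hts, mul_zero]
    · rw [transpose_apply, assemble_offdiag P u t k i hut, zero_mul]

private lemma frobInner_mul_orth (M O : Mat d T) (hO : Oᵀ * O = 1) :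
    frobInner (M * O) (M * O) = frobInner M M := by
  rw [frobInner_eq_trace, frobInner_eq_trace, transpose_mul]
  have hOOt : O * Oᵀ = 1 := mul_eq_one_comm.mp hO
  have h1 : Oᵀ * Mᵀ * (M * O) = Oᵀ * (Mᵀ * M * O) := by simp only [Matrix.mul_assoc]
  rw [h1, trace_mul_comm, Matrix.mul_assoc, hOOt, mul_one]

end AuxBlocks

/-- the infimum defining `d_ABW(L,M)` is attained, and
`d_ABW(L,M)² = ‖L‖_F² + ‖M‖_F² - 2 ∑_t tr(((MᵀL)_{t,t}ᵀ (MᵀL)_{t,t})^{1/2})`. -/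
theorem stmt0 (d T : ℕ) (hd : 0 < d) (hT : 0 < T) (L M : Mat d T)
    (hL : memL L) (hM : memL M) :
    (∃ O : Mat d T, memO O ∧ frobNorm (L - M * O) = dABW L M) ∧
    dABW L M ^ 2 =
      frobNorm L ^ 2 + frobNorm M ^ 2 - 2 * ∑ t : Fin T, svSum (blk (Mᵀ * L) t) := by
  set A := Mᵀ * L with hA
  have hproc : ∀ t : Fin T, ∃ Q : Matrix (Fin d) (Fin d) ℝ, Qᵀ * Q = 1 ∧
      (∀ R : Matrix (Fin d) (Fin d) ℝ, Rᵀ * R = 1 →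
        ((blk A t) * R).trace ≤ ((blk A t) * Q).trace) ∧
      ((blk A t) * Q).trace = svSum (blk A t) := fun t => procrustes (blk A t)
  choose Q hQorth hQmax hQtr using hproc
  set O₀ := assemble (fun t => (Q t)ᵀ) with hO0
  have hO0blk : ∀ t, blk O₀ t = (Q t)ᵀ := fun t => assemble_blk _ t
  have hO0memO : memO O₀ := assemble_memO _ (fun t => by
    rw [transpose_transpose]; exact mul_eq_one_comm.mp (hQorth t))
  have hinner : ∀ O : Mat d T, memO O →
      frobInner L (M * O) = ∑ t, ((blk A t) * (blk O t)ᵀ).trace := by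
    intro O hO
    rw [frobInner_eq_trace, ← Matrix.mul_assoc,
      show Lᵀ * M = Aᵀ by rw [hA, transpose_mul, transpose_transpose],
      ← frobInner_eq_trace, frobInner_blocks A O hO.1]
    exact Finset.sum_congr rfl fun t _ => frobInner_eq_trace' _ _
  have hexp : ∀ O : Mat d T, memO O → frobNorm (L - M * O) ^ 2
      = frobNorm L ^ 2 + frobNorm M ^ 2 - 2 * ∑ t, ((blk A t) * (blk O t)ᵀ).trace := by
    intro O hO
    have hMO : frobNorm (M * O) ^ 2 = frobNorm M ^ 2 := by
      rw [frobNorm_sq, frobNorm_sq, frobInner_mul_orth M O hO.2]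
    rw [frob_expand, hMO, hinner O hO]
  set E := frobNorm L ^ 2 + frobNorm M ^ 2 - 2 * ∑ t, svSum (blk A t) with hE
  have hopt : frobNorm (L - M * O₀) ^ 2 = E := by
    rw [hexp O₀ hO0memO, hE]
    have h : ∀ t : Fin T, ((blk A t) * (blk O₀ t)ᵀ).trace = svSum (blk A t) := fun t => by
      rw [hO0blk, transpose_transpose, hQtr]
    rw [Finset.sum_congr rfl (fun t _ => h t)]
  have hlb : ∀ O : Mat d T, memO O → E ≤ frobNorm (L - M * O) ^ 2 := by
    intro O hO
    rw [hexp O hO, hE]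
    have h : ∀ t : Fin T, ((blk A t) * (blk O t)ᵀ).trace ≤ svSum (blk A t) := by
      intro t
      have horth : ((blk O t)ᵀ)ᵀ * (blk O t)ᵀ = 1 := by
        rw [transpose_transpose]
        exact mul_eq_one_comm.mp (blk_orth O hO t)
      rw [← hQtr t]
      exact hQmax t ((blk O t)ᵀ) horth
    have := Finset.sum_le_sum fun t (_ : t ∈ Finset.univ) => h t
    linarith
  set r := frobNorm (L - M * O₀) with hr
  have hrE : r ^ 2 = E := hopt
  have hrnn : 0 ≤ r := Real.sqrt_nonneg _
  have hmemS : r ∈ {r' : ℝ | ∃ O : Mat d T, memO O ∧ r' = frobNorm (L - M * O)} :=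
    ⟨O₀, hO0memO, rfl⟩
  have hlow : ∀ r' ∈ {r' : ℝ | ∃ O : Mat d T, memO O ∧ r' = frobNorm (L - M * O)},
      r ≤ r' := by
    rintro r' ⟨O, hO, rfl⟩
    have h1 : 0 ≤ frobNorm (L - M * O) := Real.sqrt_nonneg _
    have h2 := hlb O hO
    nlinarith [hrE]
  have hInf : dABW L M = r := by
    rw [dABW]
    refine le_antisymm (csInf_le ⟨0, ?_⟩ hmemS) (le_csInf ⟨r, hmemS⟩ hlow)
    rintro x ⟨O, _, rfl⟩
    exact Real.sqrt_nonneg _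
  constructor
  · exact ⟨O₀, hO0memO, by rw [hInf]⟩
  · rw [hInf, hrE, hE]
end

section
/- For all L, M ∈ 𝐋, the set {MP : P ∈ 𝐎*(L,M)} is a singleton if and only if rk((MᵀM)_{t,t}) = rk((MᵀL)_{t,t}) for all t = 1,…,T. (Equivalently, the set {MP − L : P ∈ 𝐎*(L,M)} modulo right-multiplication by 𝐎*(L,L) is a singleton if and only if this rank condition holds; this characterizes when there exists a unique geodesic between [L] and [M].) -/
open Matrix Filter Topology

namespace Stmt13Aux


variable {d : ℕ}

abbrev Sq (d : ℕ) := Matrix (Fin d) (Fin d) ℝ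

/-- Blockwise optimizer set. -/
def bOpt (B : Sq d) : Set (Sq d) :=
  {Q | Qᵀ * Q = 1 ∧ ∀ Q' : Sq d, Q'ᵀ * Q' = 1 → (Q'ᵀ * B).trace ≤ (Qᵀ * B).trace}

lemma dotmv {m : Type*} [Fintype m] (M : Matrix m (Fin d) ℝ) (a : Fin d → ℝ) (z : m → ℝ) :
    (M *ᵥ a) ⬝ᵥ z = a ⬝ᵥ (Mᵀ *ᵥ z) := by
  rw [dotProduct_mulVec, vecMul_transpose]

lemma dot_self_nonneg (a : Fin d → ℝ) : 0 ≤ a ⬝ᵥ a :=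
  Finset.sum_nonneg fun i _ => mul_self_nonneg _

lemma dot_le_one {x y : Fin d → ℝ} (hx : x ⬝ᵥ x = 1) (hy : y ⬝ᵥ y = 1) : x ⬝ᵥ y ≤ 1 := by
  have h0 : 0 ≤ (x - y) ⬝ᵥ (x - y) := dot_self_nonneg _
  rw [sub_dotProduct, dotProduct_sub, dotProduct_sub, hx, hy, dotProduct_comm y x] at h0
  linarith

lemma eq_of_dot_eq_one {x y : Fin d → ℝ} (hx : x ⬝ᵥ x = 1) (hy : y ⬝ᵥ y = 1)
    (hxy : x ⬝ᵥ y = 1) : x = y := by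
  have h0 : (x - y) ⬝ᵥ (x - y) = 0 := by
    rw [sub_dotProduct, dotProduct_sub, dotProduct_sub, hx, hy, dotProduct_comm y x, hxy]; ring
  have := dotProduct_self_eq_zero.mp h0
  exact sub_eq_zero.mp this

/-- The SVD package for a real square matrix. -/
lemma svd_package (B : Sq d) :
    ∃ (v u : Fin d → (Fin d → ℝ)) (σ : Fin d → ℝ),
      (∀ k, 0 ≤ σ k) ∧
      (∀ k l, v k ⬝ᵥ v l = if k = l then (1:ℝ) else 0) ∧
      (∀ k l, u k ⬝ᵥ u l = if k = l then (1:ℝ) else 0) ∧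
      (∀ k, B *ᵥ v k = σ k • u k) := by
  classical
  set S := Bᵀ * B with hSdef
  have hS : S.IsHermitian := by
    have := isHermitian_conjTranspose_mul_self B; rwa [conjTranspose_eq_transpose_of_trivial] at this
  have hPSD : S.PosSemidef := by
    rw [hSdef, ← conjTranspose_eq_transpose_of_trivial]
    exact Matrix.posSemidef_conjTranspose_mul_self B
  set lam : Fin d → ℝ := hS.eigenvalues with hlam
  set v : Fin d → (Fin d → ℝ) := fun k => ⇑(hS.eigenvectorBasis k) with hvdef
  have hSv : ∀ k, S *ᵥ v k = lam k • v k := fun k => hS.mulVec_eigenvectorBasis k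
  have hlam0 : ∀ k, 0 ≤ lam k := fun k => hPSD.eigenvalues_nonneg k
  have hv : ∀ k l, v k ⬝ᵥ v l = if k = l then (1:ℝ) else 0 := by
    intro k l
    have horth := hS.eigenvectorBasis.orthonormal
    rw [orthonormal_iff_ite] at horth
    have h := horth k l
    rw [dotProduct_comm]
    simpa [PiLp.inner_apply, RCLike.inner_apply, dotProduct, v] using h
  set σ : Fin d → ℝ := fun k => Real.sqrt (lam k) with hσdef
  have hσ0 : ∀ k, 0 ≤ σ k := fun k => Real.sqrt_nonneg _
  have hσsq : ∀ k, σ k * σ k = lam k := fun k => Real.mul_self_sqrt (hlam0 k)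
  have hσzero : ∀ k, σ k = 0 → lam k = 0 := by
    intro k h; rw [← hσsq k, h, mul_zero]
  -- dot products of images
  have hkey : ∀ x y : Fin d → ℝ, (B *ᵥ x) ⬝ᵥ (B *ᵥ y) = x ⬝ᵥ (S *ᵥ y) := by
    intro x y
    rw [hSdef, ← mulVec_mulVec, dotmv]
  have hBv : ∀ k l, (B *ᵥ v k) ⬝ᵥ (B *ᵥ v l) = if k = l then lam l else 0 := by
    intro k l
    rw [hkey, hSv l, dotProduct_smul, smul_eq_mul, hv k l]
    by_cases h : k = l <;> simp [h]
  -- the orthonormal family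
  set s : Set (Fin d) := {k | σ k ≠ 0} with hs
  set w : Fin d → EuclideanSpace ℝ (Fin d) :=
    fun k => (WithLp.equiv 2 _).symm ((σ k)⁻¹ • (B *ᵥ v k)) with hw
  have hinner : ∀ a b : Fin d → ℝ,
      (inner ℝ ((WithLp.equiv 2 (Fin d → ℝ)).symm a) ((WithLp.equiv 2 (Fin d → ℝ)).symm b) : ℝ)
        = a ⬝ᵥ b := by
    intro a b
    simp [PiLp.inner_apply, RCLike.inner_apply, dotProduct]
    exact Finset.sum_congr rfl fun i _ => mul_comm _ _
  have horthw : Orthonormal ℝ (s.restrict w) := by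
    rw [orthonormal_iff_ite]
    rintro ⟨i, hi⟩ ⟨j, hj⟩
    have : (inner ℝ (w i) (w j) : ℝ) = if i = j then 1 else 0 := by
      rw [hw]
      rw [hinner]
      rw [smul_dotProduct, dotProduct_smul, hBv i j]
      by_cases h : i = j
      · subst h
        have hσi : σ i ≠ 0 := hi
        have hlami : lam i ≠ 0 := by
          intro h0
          exact hσi (by rw [hσdef]; simp [h0])
        simp only [if_pos rfl, smul_eq_mul]
        field_simp
        simp only [↓reduceIte, mul_one]
        rw [← hσsq i]
        ring
      · simp [h]
    show inner ℝ (w i) (w j) = _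
    simpa [Subtype.ext_iff] using this
  have hcard : Module.finrank ℝ (EuclideanSpace ℝ (Fin d)) = Fintype.card (Fin d) :=
    finrank_euclideanSpace
  obtain ⟨b, hb⟩ := horthw.exists_orthonormalBasis_extension_of_card_eq hcard
  set u : Fin d → (Fin d → ℝ) := fun k => ⇑(b k) with hu
  have huorth : ∀ k l, u k ⬝ᵥ u l = if k = l then (1:ℝ) else 0 := by
    intro k l
    have horth := b.orthonormal
    rw [orthonormal_iff_ite] at horth
    have h := horth k l
    rw [dotProduct_comm]
    simpa [PiLp.inner_apply, RCLike.inner_apply, dotProduct, u] using h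
  refine ⟨v, u, σ, hσ0, hv, huorth, ?_⟩
  intro k
  by_cases hk : σ k = 0
  · have hBk : B *ᵥ v k = 0 := by
      have h := hBv k k
      rw [if_pos rfl, hσzero k hk] at h
      exact dotProduct_self_eq_zero.mp h
    rw [hBk, hk, zero_smul]
  · have hbk : b k = w k := hb k hk
    have : u k = (σ k)⁻¹ • (B *ᵥ v k) := by
      rw [hu]
      funext i
      show (b k) i = _
      rw [hbk]
      rfl
    rw [this, smul_smul, mul_inv_cancel₀ hk, one_smul]



/-- Everything needed about the blockwise optimization problem for `B`. -/
lemma core_main (B : Sq d) :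
    ∃ (v u : Fin d → (Fin d → ℝ)) (σ : Fin d → ℝ) (Q₀ : Sq d),
      (∀ k l, v k ⬝ᵥ v l = if k = l then (1:ℝ) else 0) ∧
      (∀ k l, u k ⬝ᵥ u l = if k = l then (1:ℝ) else 0) ∧
      (∀ x : Fin d → ℝ, x = ∑ k, (v k ⬝ᵥ x) • v k) ∧
      (∀ x : Fin d → ℝ, x = ∑ k, (u k ⬝ᵥ x) • u k) ∧
      Q₀ ∈ bOpt B ∧
      (∀ k, Q₀ *ᵥ v k = u k) ∧
      (∀ Q ∈ bOpt B, ∀ k, σ k ≠ 0 → Q *ᵥ v k = u k) ∧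
      (∀ Q : Sq d, Qᵀ * Q = 1 → (∀ k, σ k ≠ 0 → Q *ᵥ v k = u k) → Q ∈ bOpt B) ∧
      (LinearMap.range B.mulVecLin =
        Submodule.span ℝ (Set.range (fun k : {k : Fin d // σ k ≠ 0} => u ↑k))) := by
  classical
  obtain ⟨v, u, σ, hσ0, hv, hu, hBv⟩ := svd_package B
  -- matrices whose rows are v resp. u
  set V : Sq d := Matrix.of (fun k j => v k j) with hVdef
  set U : Sq d := Matrix.of (fun k j => u k j) with hUdef
  have hVmul : V * Vᵀ = 1 := by
    ext k l
    simpa [Matrix.mul_apply, V, Matrix.one_apply, dotProduct] using hv k l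
  have hUmul : U * Uᵀ = 1 := by
    ext k l
    simpa [Matrix.mul_apply, U, Matrix.one_apply, dotProduct] using hu k l
  have hVc : Vᵀ * V = 1 := mul_eq_one_comm.mp hVmul
  have hUc : Uᵀ * U = 1 := mul_eq_one_comm.mp hUmul
  have hvc : ∀ i j, ∑ k, v k i * v k j = if i = j then (1:ℝ) else 0 := by
    intro i j
    have h := congrFun (congrFun hVc i) j
    simpa [Matrix.mul_apply, V, Matrix.one_apply] using h
  have huc : ∀ i j, ∑ k, u k i * u k j = if i = j then (1:ℝ) else 0 := by
    intro i j
    have h := congrFun (congrFun hUc i) j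
    simpa [Matrix.mul_apply, U, Matrix.one_apply] using h
  have hexv : ∀ x : Fin d → ℝ, x = ∑ k, (v k ⬝ᵥ x) • v k := by
    intro x
    funext i
    rw [Finset.sum_apply]
    simp only [Pi.smul_apply, smul_eq_mul, dotProduct, Finset.sum_mul]
    rw [Finset.sum_comm]
    calc x i = ∑ j, x j * (if j = i then (1:ℝ) else 0) := by
          simp [mul_ite]
      _ = ∑ j, ∑ k, v k j * x j * v k i := by
          refine Finset.sum_congr rfl fun j _ => ?_
          rw [← hvc j i, Finset.mul_sum]
          refine Finset.sum_congr rfl fun k _ => by ring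
  have hexu : ∀ x : Fin d → ℝ, x = ∑ k, (u k ⬝ᵥ x) • u k := by
    intro x
    funext i
    rw [Finset.sum_apply]
    simp only [Pi.smul_apply, smul_eq_mul, dotProduct, Finset.sum_mul]
    rw [Finset.sum_comm]
    calc x i = ∑ j, x j * (if j = i then (1:ℝ) else 0) := by
          simp [mul_ite]
      _ = ∑ j, ∑ k, u k j * x j * u k i := by
          refine Finset.sum_congr rfl fun j _ => ?_
          rw [← huc j i, Finset.mul_sum]
          refine Finset.sum_congr rfl fun k _ => by ring
  -- trace formula
  have hdiag : ∀ (Y : Sq d) (k : Fin d), (V * Y * Vᵀ) k k = v k ⬝ᵥ (Y *ᵥ v k) := by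
    intro Y k
    simp only [Matrix.mul_apply, Matrix.transpose_apply, dotProduct, mulVec,
      Finset.sum_mul, Finset.mul_sum, V, Matrix.of_apply]
    rw [Finset.sum_comm]
    exact Finset.sum_congr rfl fun j _ => Finset.sum_congr rfl fun l _ => by ring
  have htr : ∀ Q : Sq d, (Qᵀ * B).trace = ∑ k, σ k * ((Q *ᵥ v k) ⬝ᵥ u k) := by
    intro Q
    have h1 : (Qᵀ * B).trace = (V * (Qᵀ * B) * Vᵀ).trace := by
      rw [Matrix.trace_mul_comm (V * (Qᵀ * B)) Vᵀ, ← Matrix.mul_assoc, hVc, Matrix.one_mul]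
    rw [h1, Matrix.trace]
    refine Finset.sum_congr rfl fun k _ => ?_
    rw [Matrix.diag_apply, hdiag]
    rw [← Matrix.mulVec_mulVec, hBv k, Matrix.mulVec_smul, dotProduct_smul, smul_eq_mul]
    congr 1
    exact (dotmv Q (v k) (u k)).symm
  -- preserved dot products for orthogonal Q
  have hQdot : ∀ Q : Sq d, Qᵀ * Q = 1 → ∀ a b : Fin d → ℝ,
      (Q *ᵥ a) ⬝ᵥ (Q *ᵥ b) = a ⬝ᵥ b := by
    intro Q hQ a b
    rw [dotmv, Matrix.mulVec_mulVec, hQ, Matrix.one_mulVec]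
  -- value of optimal trace
  have hval : ∀ Q : Sq d, (∀ k, σ k ≠ 0 → Q *ᵥ v k = u k) → (Qᵀ * B).trace = ∑ k, σ k := by
    intro Q hQv
    rw [htr Q]
    refine Finset.sum_congr rfl fun k _ => ?_
    by_cases hk : σ k = 0
    · rw [hk, zero_mul]
    · rw [hQv k hk]
      have := hu k k
      rw [if_pos rfl] at this
      rw [this, mul_one]
  have hub : ∀ Q : Sq d, Qᵀ * Q = 1 → (Qᵀ * B).trace ≤ ∑ k, σ k := by
    intro Q hQ
    rw [htr Q]
    refine Finset.sum_le_sum fun k _ => ?_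
    have h1 : (Q *ᵥ v k) ⬝ᵥ (Q *ᵥ v k) = 1 := by
      rw [hQdot Q hQ]
      have := hv k k; rwa [if_pos rfl] at this
    have h2 : u k ⬝ᵥ u k = 1 := by have := hu k k; rwa [if_pos rfl] at this
    have := dot_le_one h1 h2
    calc σ k * ((Q *ᵥ v k) ⬝ᵥ u k) ≤ σ k * 1 := by
          exact mul_le_mul_of_nonneg_left this (hσ0 k)
      _ = σ k := mul_one _
  -- the base optimizer
  set Q₀ : Sq d := Uᵀ * V with hQ₀def
  have hQ₀o : Q₀ᵀ * Q₀ = 1 := by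
    rw [hQ₀def, Matrix.transpose_mul, Matrix.transpose_transpose, Matrix.mul_assoc,
      ← Matrix.mul_assoc U Uᵀ V, hUmul, Matrix.one_mul, hVc]
  have hQ₀v : ∀ k, Q₀ *ᵥ v k = u k := by
    intro k
    have hsingle : Vᵀ *ᵥ Pi.single k 1 = v k := by
      rw [Matrix.mulVec_single]
      funext i
      simp [V]
    rw [← hsingle, Matrix.mulVec_mulVec, Matrix.mul_assoc, hVmul, Matrix.mul_one,
      Matrix.mulVec_single]
    funext i
    simp [U]
  have hQ₀mem : Q₀ ∈ bOpt B := ⟨hQ₀o, fun Q' h' => by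
    rw [hval Q₀ (fun k _ => hQ₀v k)]; exact hub Q' h'⟩
  have hoptiff : ∀ Q : Sq d, Qᵀ * Q = 1 → (∀ k, σ k ≠ 0 → Q *ᵥ v k = u k) → Q ∈ bOpt B := by
    intro Q hQ hQv
    exact ⟨hQ, fun Q' h' => by rw [hval Q hQv]; exact hub Q' h'⟩
  have hopt : ∀ Q ∈ bOpt B, ∀ k, σ k ≠ 0 → Q *ᵥ v k = u k := by
    intro Q hQ k hk
    obtain ⟨hQo, hQmax⟩ := hQ
    have htreq : (Qᵀ * B).trace = ∑ j, σ j :=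
      le_antisymm (hub Q hQo) (by
        have h1 := hQmax Q₀ hQ₀o
        rwa [hval Q₀ (fun k _ => hQ₀v k)] at h1)
    have hsum0 : ∑ j, σ j * (1 - ((Q *ᵥ v j) ⬝ᵥ u j)) = 0 := by
      have h3 := htr Q
      rw [htreq] at h3
      have h2 : ∑ j, σ j * (1 - ((Q *ᵥ v j) ⬝ᵥ u j))
          = ∑ j, σ j - ∑ j, σ j * ((Q *ᵥ v j) ⬝ᵥ u j) := by
        rw [← Finset.sum_sub_distrib]
        exact Finset.sum_congr rfl fun j _ => by ring
      rw [h2, ← h3]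
      ring
    have hnn : ∀ j ∈ Finset.univ, (0:ℝ) ≤ σ j * (1 - ((Q *ᵥ v j) ⬝ᵥ u j)) := by
      intro j _
      have h1 : (Q *ᵥ v j) ⬝ᵥ (Q *ᵥ v j) = 1 := by
        rw [hQdot Q hQo]
        have := hv j j; rwa [if_pos rfl] at this
      have h2 : u j ⬝ᵥ u j = 1 := by have := hu j j; rwa [if_pos rfl] at this
      have h3 := dot_le_one h1 h2
      have := hσ0 j
      nlinarith
    have hz := (Finset.sum_eq_zero_iff_of_nonneg hnn).mp hsum0 k (Finset.mem_univ k)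
    have hdot1 : (Q *ᵥ v k) ⬝ᵥ u k = 1 := by
      rcases mul_eq_zero.mp hz with h | h
      · exact absurd h hk
      · linarith
    exact eq_of_dot_eq_one
      (by rw [hQdot Q hQo]; have := hv k k; rwa [if_pos rfl] at this)
      (by have := hu k k; rwa [if_pos rfl] at this) hdot1
  have hspan : LinearMap.range B.mulVecLin =
      Submodule.span ℝ (Set.range (fun k : {k : Fin d // σ k ≠ 0} => u ↑k)) := by
    apply le_antisymm
    · rintro y ⟨x, rfl⟩
      rw [Matrix.mulVecLin_apply]
      have hx : B *ᵥ x = ∑ k, ((v k ⬝ᵥ x) * σ k) • u k := by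
        conv_lhs => rw [hexv x]
        rw [← Matrix.mulVecLin_apply, map_sum]
        refine Finset.sum_congr rfl fun k _ => ?_
        rw [LinearMap.map_smul, Matrix.mulVecLin_apply, hBv k, smul_smul]
      rw [hx]
      refine Submodule.sum_mem _ fun k _ => ?_
      by_cases hk : σ k = 0
      · rw [hk, mul_zero, zero_smul]; exact Submodule.zero_mem _
      · exact Submodule.smul_mem _ _ (Submodule.subset_span ⟨⟨k, hk⟩, rfl⟩)
    · rw [Submodule.span_le]
      rintro _ ⟨⟨k, hk⟩, rfl⟩
      refine ⟨(σ k)⁻¹ • v k, ?_⟩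
      rw [Matrix.mulVecLin_apply, Matrix.mulVec_smul, hBv k, smul_smul,
        inv_mul_cancel₀ hk, one_smul]
  exact ⟨v, u, σ, Q₀, hv, hu, hexv, hexu, hQ₀mem, hQ₀v, hopt, hoptiff, hspan⟩


lemma mat_eq_of_mulVec {m : Type*} [Fintype m] [DecidableEq (Fin d)]
    (A A' : Matrix m (Fin d) ℝ) (h : ∀ x, A *ᵥ x = A' *ᵥ x) : A = A' := by
  ext i j
  have := congrFun (h (Pi.single j 1)) i
  simpa [Matrix.mulVec_single] using this

lemma mulVec_sumsmul {m : Type*} [Fintype m] (A : Matrix m (Fin d) ℝ) (c : Fin d → ℝ)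
    (w : Fin d → Fin d → ℝ) :
    A *ᵥ (∑ k, c k • w k) = ∑ k, c k • (A *ᵥ w k) := by
  rw [← Matrix.mulVecLin_apply, map_sum]
  exact Finset.sum_congr rfl fun k _ => by rw [LinearMap.map_smul, Matrix.mulVecLin_apply]

lemma core_iff {m : Type*} [Fintype m] [DecidableEq m] (N C : Matrix m (Fin d) ℝ) :
    (∀ Q ∈ bOpt (Nᵀ * C), ∀ Q' ∈ bOpt (Nᵀ * C), N * Q = N * Q') ↔
      (Nᵀ * N).rank = (Nᵀ * C).rank := by
  classical
  set B := Nᵀ * C with hB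
  obtain ⟨v, u, σ, Q₀, hv, hu, hexv, hexu, hQ₀mem, hQ₀v, hopt, hoptiff, hspan⟩ := core_main B
  have hQdot : ∀ Q : Sq d, Qᵀ * Q = 1 → ∀ a b : Fin d → ℝ,
      (Q *ᵥ a) ⬝ᵥ (Q *ᵥ b) = a ⬝ᵥ b := by
    intro Q hQ a b
    rw [dotmv, Matrix.mulVec_mulVec, hQ, Matrix.one_mulVec]
  set K := Submodule.span ℝ (Set.range (fun k : {k : Fin d // σ k ≠ 0} => u ↑k)) with hK
  have hrankB : B.rank = Module.finrank ℝ K := by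
    unfold Matrix.rank
    rw [hspan]
  have hNTfin : Module.finrank ℝ (LinearMap.range Nᵀ.mulVecLin) = N.rank := by
    rw [← Matrix.rank_transpose N]; rfl
  have hsub : K ≤ LinearMap.range Nᵀ.mulVecLin := by
    rw [← hspan, hB, Matrix.mulVecLin_mul]
    exact LinearMap.range_comp_le_range _ _
  have huu1 : ∀ k, u k ⬝ᵥ u k = 1 := by
    intro k; have := hu k k; rwa [if_pos rfl] at this
  constructor
  · -- uniqueness → rank equality
    intro huniq
    rw [Matrix.rank_transpose_mul_self]
    -- N kills u k for σ k = 0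
    have hNu : ∀ k, σ k = 0 → N *ᵥ u k = 0 := by
      intro k hk
      set P : Sq d := vecMulVec (u k) (u k) with hP
      have hPapp : ∀ x : Fin d → ℝ, P *ᵥ x = (u k ⬝ᵥ x) • u k := by
        intro x
        funext i
        show ∑ j, (u k i * u k j) * x j = (∑ j, u k j * x j) * u k i
        rw [Finset.sum_mul]
        exact Finset.sum_congr rfl fun j _ => by ring
      set R : Sq d := 1 - (2:ℝ) • P with hR
      have hRapp : ∀ x, R *ᵥ x = x - (2 * (u k ⬝ᵥ x)) • u k := by
        intro x
        rw [hR, Matrix.sub_mulVec, Matrix.one_mulVec, Matrix.smul_mulVec, hPapp,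
          smul_smul]
      have hPsymm : Pᵀ = P := by
        ext i j
        show u k j * u k i = u k i * u k j
        ring
      have hRsymm : Rᵀ = R := by
        rw [hR, Matrix.transpose_sub, Matrix.transpose_one, Matrix.transpose_smul, hPsymm]
      have hRR : R * R = 1 := by
        apply mat_eq_of_mulVec
        intro x
        rw [← Matrix.mulVec_mulVec, hRapp, hRapp, Matrix.one_mulVec,
          dotProduct_sub, dotProduct_smul, huu1 k, smul_eq_mul, mul_one]
        have harith : (2 * (u k ⬝ᵥ x - 2 * (u k ⬝ᵥ x))) = -(2 * (u k ⬝ᵥ x)) := by ring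
        rw [harith, neg_smul, sub_neg_eq_add, sub_add_cancel]
      have hRQmem : R * Q₀ ∈ bOpt B := by
        apply hoptiff
        · rw [Matrix.transpose_mul, Matrix.mul_assoc, ← Matrix.mul_assoc Rᵀ R Q₀,
            hRsymm, hRR, Matrix.one_mul, hQ₀mem.1]
        · intro j hj
          rw [← Matrix.mulVec_mulVec, hQ₀v j, hRapp]
          have h0 : u k ⬝ᵥ u j = 0 := by
            have := hu k j
            rw [if_neg (by rintro rfl; exact hj hk)] at this
            exact this
          rw [h0, mul_zero, zero_smul, sub_zero]
      have heq := huniq Q₀ hQ₀mem (R * Q₀) hRQmem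
      have hQ₀Q₀ : Q₀ * Q₀ᵀ = 1 := mul_eq_one_comm.mp hQ₀mem.1
      have hNR : N = N * R := by
        have h2 : N * Q₀ * Q₀ᵀ = N * (R * Q₀) * Q₀ᵀ := by rw [heq]
        rwa [Matrix.mul_assoc N Q₀ Q₀ᵀ, hQ₀Q₀, Matrix.mul_one, ← Matrix.mul_assoc N R Q₀,
          Matrix.mul_assoc (N * R) Q₀ Q₀ᵀ, hQ₀Q₀, Matrix.mul_one] at h2
      have h3 : N *ᵥ u k = N *ᵥ (R *ᵥ u k) := by rw [Matrix.mulVec_mulVec, ← hNR]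
      rw [hRapp, huu1 k, mul_one] at h3
      have h4 : u k - (2:ℝ) • u k = -(u k) := by
        funext i
        simp only [Pi.sub_apply, Pi.smul_apply, Pi.neg_apply, smul_eq_mul]
        ring
      rw [h4, Matrix.mulVec_neg] at h3
      have h5 : (2:ℝ) • (N *ᵥ u k) = 0 := by
        rw [two_smul]
        nth_rewrite 1 [h3]
        abel
      rcases smul_eq_zero.mp h5 with h | h
      · norm_num at h
      · exact h
    have hle : LinearMap.range Nᵀ.mulVecLin ≤ K := by
      rintro y ⟨z, rfl⟩
      rw [Matrix.mulVecLin_apply]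
      rw [hexu (Nᵀ *ᵥ z)]
      refine Submodule.sum_mem _ fun k _ => ?_
      by_cases hk : σ k = 0
      · have h0 : u k ⬝ᵥ (Nᵀ *ᵥ z) = 0 := by
          rw [← dotmv N (u k) z, hNu k hk, zero_dotProduct]
        rw [h0, zero_smul]
        exact Submodule.zero_mem _
      · exact Submodule.smul_mem _ _ (Submodule.subset_span ⟨⟨k, hk⟩, rfl⟩)
    have hBN : B.rank ≤ N.rank := by
      rw [hB]
      calc (Nᵀ * C).rank ≤ Nᵀ.rank := Matrix.rank_mul_le_left _ _
        _ = N.rank := Matrix.rank_transpose N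
    refine le_antisymm ?_ hBN
    calc N.rank = Module.finrank ℝ (LinearMap.range Nᵀ.mulVecLin) := hNTfin.symm
      _ ≤ Module.finrank ℝ K := Submodule.finrank_mono hle
      _ = B.rank := hrankB.symm
  · -- rank equality → uniqueness
    intro hrank Q hQ Q' hQ'
    have hNrkB : N.rank = B.rank := by rw [← Matrix.rank_transpose_mul_self N, hrank]
    have hKeq : LinearMap.range Nᵀ.mulVecLin = K := by
      refine (Submodule.eq_of_le_of_finrank_le hsub ?_).symm
      rw [hNTfin, hNrkB, hrankB]
    have hNkill : ∀ x : Fin d → ℝ, (∀ k, σ k ≠ 0 → u k ⬝ᵥ x = 0) → N *ᵥ x = 0 := by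
      intro x hx
      funext p
      have h1 : (N *ᵥ x) p = (Nᵀ *ᵥ Pi.single p 1) ⬝ᵥ x := by
        rw [Matrix.mulVec_single]
        show ∑ j, N p j * x j = ∑ j, (Nᵀ j p * 1) * x j
        exact Finset.sum_congr rfl fun j _ => by rw [Matrix.transpose_apply, mul_one]
      set φ : (Fin d → ℝ) →ₗ[ℝ] ℝ :=
        { toFun := fun y => y ⬝ᵥ x,
          map_add' := fun a b => add_dotProduct a b x,
          map_smul' := fun c a => by simp [smul_dotProduct] } with hφ
      have hKker : K ≤ LinearMap.ker φ := by
        rw [hK, Submodule.span_le]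
        rintro _ ⟨⟨k, hk⟩, rfl⟩
        simpa [φ, LinearMap.mem_ker] using hx k hk
      have h2 : Nᵀ *ᵥ Pi.single p 1 ∈ K := by
        rw [← hKeq]
        exact ⟨Pi.single p 1, by rw [Matrix.mulVecLin_apply]⟩
      have h3 := hKker h2
      rw [LinearMap.mem_ker] at h3
      rw [h1]
      exact h3
    apply mat_eq_of_mulVec
    intro x
    rw [← Matrix.mulVec_mulVec, ← Matrix.mulVec_mulVec]
    conv_lhs => rw [hexv x]
    conv_rhs => rw [hexv x]
    rw [mulVec_sumsmul Q, mulVec_sumsmul Q', mulVec_sumsmul N, mulVec_sumsmul N]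
    refine Finset.sum_congr rfl fun k _ => ?_
    congr 1
    by_cases hk : σ k = 0
    · have hperp : ∀ Q₁ : Sq d, Q₁ ∈ bOpt B → ∀ j, σ j ≠ 0 → u j ⬝ᵥ (Q₁ *ᵥ v k) = 0 := by
        intro Q₁ hQ₁ j hj
        rw [← hopt Q₁ hQ₁ j hj, hQdot Q₁ hQ₁.1]
        have := hv j k
        rw [if_neg (by rintro rfl; exact hj hk)] at this
        exact this
      rw [hNkill (Q *ᵥ v k) (hperp Q hQ), hNkill (Q' *ᵥ v k) (hperp Q' hQ')]
    · rw [hopt Q hQ k hk, hopt Q' hQ' k hk]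



variable {d T : ℕ}

/-- Assemble a block-diagonal matrix from diagonal blocks. -/
def asm (f : Fin T → Sq d) : Mat d T :=
  fun p q => if p.1 = q.1 then f p.1 p.2 q.2 else 0

lemma asm_apply (f : Fin T → Sq d) (t s : Fin T) (i j : Fin d) :
    asm f (t, i) (s, j) = if t = s then f t i j else 0 := rfl

lemma blk_asm (f : Fin T → Sq d) (t : Fin T) : blk (asm f) t = f t := by
  ext i j
  rw [blk, asm_apply, if_pos rfl]

lemma asm_offdiag (f : Fin T → Sq d) :
    ∀ t s i j, t ≠ s → asm f (t, i) (s, j) = 0 := by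
  intro t s i j hts
  rw [asm_apply, if_neg hts]

lemma blk_transpose_mul (A B : Mat d T) (t : Fin T) :
    blk (Aᵀ * B) t = (colBlk A t)ᵀ * colBlk B t := by
  ext i j
  rw [blk, Matrix.mul_apply, Matrix.mul_apply]
  exact Finset.sum_congr rfl fun p _ => rfl

lemma memO_asm (f : Fin T → Sq d) (h : ∀ t, (f t)ᵀ * f t = 1) : memO (asm f) := by
  refine ⟨asm_offdiag f, ?_⟩
  ext ⟨t, i⟩ ⟨s, j⟩
  rw [Matrix.mul_apply, Fintype.sum_prod_type]
  by_cases hts : t = s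
  · subst hts
    have h1 : ∀ a : Fin T, ∑ k : Fin d,
        (asm f)ᵀ (t, i) (a, k) * asm f (a, k) (t, j)
          = if a = t then ∑ k : Fin d, f t k i * f t k j else 0 := by
      intro a
      by_cases hat : a = t
      · subst hat
        rw [if_pos rfl]
        refine Finset.sum_congr rfl fun k _ => ?_
        rw [Matrix.transpose_apply, asm_apply, asm_apply, if_pos rfl, if_pos rfl]
      · rw [if_neg hat]
        refine Finset.sum_eq_zero fun k _ => ?_
        rw [Matrix.transpose_apply, asm_apply, if_neg hat, zero_mul]
    rw [Finset.sum_congr rfl fun a _ => h1 a, Finset.sum_ite_eq' Finset.univ t _,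
      if_pos (Finset.mem_univ t)]
    have h2 := congrFun (congrFun (h t) i) j
    rw [Matrix.mul_apply] at h2
    have h3 : ∑ k : Fin d, f t k i * f t k j = ∑ k : Fin d, (f t)ᵀ i k * f t k j :=
      Finset.sum_congr rfl fun k _ => rfl
    rw [h3, h2]
    by_cases hij : i = j
    · subst hij; simp [Matrix.one_apply]
    · simp [Matrix.one_apply, hij, Prod.ext_iff]
  · have h1 : ∀ (a : Fin T) (k : Fin d),
        (asm f)ᵀ (t, i) (a, k) * asm f (a, k) (s, j) = 0 := by
      intro a k
      by_cases hat : a = t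
      · subst hat
        rw [asm_apply, if_neg hts, mul_zero]
      · rw [Matrix.transpose_apply, asm_apply, if_neg hat, zero_mul]
    rw [Finset.sum_congr rfl fun a _ => Finset.sum_congr rfl fun k _ => h1 a k]
    simp [Matrix.one_apply, Prod.ext_iff, hts]

lemma memO_blocks {P : Mat d T} (hP : memO P) (t : Fin T) :
    (blk P t)ᵀ * blk P t = 1 := by
  obtain ⟨hoff, horth⟩ := hP
  ext i j
  have h := congrFun (congrFun horth (t, i)) (t, j)
  rw [Matrix.mul_apply, Fintype.sum_prod_type] at h
  have h1 : ∀ a : Fin T, ∑ k : Fin d, Pᵀ (t, i) (a, k) * P (a, k) (t, j)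
      = if a = t then ∑ k : Fin d, blk P t k i * blk P t k j else 0 := by
    intro a
    by_cases hat : a = t
    · subst hat
      rw [if_pos rfl]
      exact Finset.sum_congr rfl fun k _ => rfl
    · rw [if_neg hat]
      exact Finset.sum_eq_zero fun k _ => by
        rw [Matrix.transpose_apply, hoff a t k i hat, zero_mul]
  rw [Finset.sum_congr rfl fun a _ => h1 a, Finset.sum_ite_eq' Finset.univ t _,
    if_pos (Finset.mem_univ t)] at h
  rw [Matrix.mul_apply]
  have h3 : ∑ k : Fin d, (blk P t)ᵀ i k * blk P t k j
      = ∑ k : Fin d, blk P t k i * blk P t k j :=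
    Finset.sum_congr rfl fun k _ => rfl
  rw [h3, h]
  by_cases hij : i = j
  · subst hij; simp [Matrix.one_apply]
  · simp [Matrix.one_apply, hij, Prod.ext_iff]

lemma colBlk_mul {P : Mat d T} (M : Mat d T)
    (hP : ∀ t s i j, t ≠ s → P (t, i) (s, j) = 0) (t : Fin T) :
    colBlk (M * P) t = colBlk M t * blk P t := by
  ext p j
  rw [colBlk, Matrix.mul_apply, Matrix.mul_apply, Fintype.sum_prod_type]
  have h1 : ∀ a : Fin T, ∑ k : Fin d, M p (a, k) * P (a, k) (t, j)
      = if a = t then ∑ k : Fin d, colBlk M t p k * blk P t k j else 0 := by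
    intro a
    by_cases hat : a = t
    · subst hat
      rw [if_pos rfl]
      exact Finset.sum_congr rfl fun k _ => rfl
    · rw [if_neg hat]
      exact Finset.sum_eq_zero fun k _ => by rw [hP a t k j hat, mul_zero]
  rw [Finset.sum_congr rfl fun a _ => h1 a, Finset.sum_ite_eq' Finset.univ t _,
    if_pos (Finset.mem_univ t)]

lemma eq_of_colBlk {A A' : Mat d T} (h : ∀ t, colBlk A t = colBlk A' t) : A = A' := by
  ext p q
  obtain ⟨s, j⟩ := q
  exact congrFun (congrFun (h s) p) j

lemma frobInner_eq_trace {m n : Type*} [Fintype m] [Fintype n] (A B : Matrix m n ℝ) :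
    frobInner A B = (Aᵀ * B).trace := by
  rw [frobInner, Matrix.trace]
  rw [Finset.sum_comm]
  refine Finset.sum_congr rfl fun j _ => ?_
  rw [Matrix.diag_apply, Matrix.mul_apply]
  exact Finset.sum_congr rfl fun i _ => rfl

lemma trace_block_decomp {O : Mat d T} (A : Mat d T)
    (hO : ∀ t s i j, t ≠ s → O (t, i) (s, j) = 0) :
    (Oᵀ * A).trace = ∑ t, ((blk O t)ᵀ * blk A t).trace := by
  rw [Matrix.trace, Fintype.sum_prod_type]
  refine Finset.sum_congr rfl fun t _ => ?_
  rw [Matrix.trace]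
  refine Finset.sum_congr rfl fun i _ => ?_
  rw [Matrix.diag_apply, Matrix.diag_apply, Matrix.mul_apply, Matrix.mul_apply,
    Fintype.sum_prod_type]
  have h1 : ∀ a : Fin T, ∑ k : Fin d, Oᵀ (t, i) (a, k) * A (a, k) (t, i)
      = if a = t then ∑ k : Fin d, (blk O t)ᵀ i k * blk A t k i else 0 := by
    intro a
    by_cases hat : a = t
    · subst hat
      rw [if_pos rfl]
      exact Finset.sum_congr rfl fun k _ => rfl
    · rw [if_neg hat]
      exact Finset.sum_eq_zero fun k _ => by
        rw [Matrix.transpose_apply, hO a t k i hat, zero_mul]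
  rw [Finset.sum_congr rfl fun a _ => h1 a, Finset.sum_ite_eq' Finset.univ t _,
    if_pos (Finset.mem_univ t)]


variable {d T : ℕ}

lemma bOpt_nonempty (B : Sq d) : ∃ Q, Q ∈ bOpt B := by
  obtain ⟨v, u, σ, Q₀, -, -, -, -, hQ₀mem, -⟩ := core_main B
  exact ⟨Q₀, hQ₀mem⟩

/-- The blockwise objective. -/
noncomputable def FF (L M O : Mat d T) : ℝ := ∑ t, ((blk O t)ᵀ * blk (Mᵀ * L) t).trace

lemma sq_expand (L M O : Mat d T) (hO : memO O) :
    ∑ p, ∑ q, (L - M * O) p q ^ 2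
      = (frobInner L L + frobInner M M) - 2 * FF L M O := by
  have h1 : ∀ p q : Fin T × Fin d, (L - M * O) p q ^ 2
      = L p q * L p q - 2 * ((M * O) p q * L p q) + (M * O) p q * (M * O) p q := by
    intro p q
    have h : (L - M * O) p q = L p q - (M * O) p q := rfl
    rw [h]; ring
  have h2 : frobInner (M * O) (M * O) = frobInner M M := by
    rw [frobInner_eq_trace, frobInner_eq_trace, Matrix.transpose_mul,
      Matrix.mul_assoc Oᵀ Mᵀ (M * O), ← Matrix.mul_assoc Mᵀ M O,
      Matrix.trace_mul_comm, Matrix.mul_assoc (Mᵀ * M) O Oᵀ,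
      mul_eq_one_comm.mp hO.2, Matrix.mul_one]
  have h3 : frobInner (M * O) L = FF L M O := by
    rw [frobInner_eq_trace, Matrix.transpose_mul, Matrix.mul_assoc,
      trace_block_decomp (Mᵀ * L) hO.1]
    rfl
  calc ∑ p, ∑ q, (L - M * O) p q ^ 2
      = ∑ p, ∑ q, (L p q * L p q - 2 * ((M * O) p q * L p q)
          + (M * O) p q * (M * O) p q) :=
        Finset.sum_congr rfl fun p _ => Finset.sum_congr rfl fun q _ => h1 p q
    _ = frobInner L L - 2 * frobInner (M * O) L + frobInner (M * O) (M * O) := by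
        rw [frobInner, frobInner, frobInner, Finset.mul_sum,
          ← Finset.sum_sub_distrib, ← Finset.sum_add_distrib]
        refine Finset.sum_congr rfl fun p _ => ?_
        rw [Finset.mul_sum, ← Finset.sum_sub_distrib, ← Finset.sum_add_distrib]
    _ = (frobInner L L + frobInner M M) - 2 * FF L M O := by
        rw [h2, h3]; ring

lemma OStar_char (L M : Mat d T) :
    ∃ P₀ : Mat d T, (memO P₀ ∧ ∀ t, blk P₀ t ∈ bOpt (blk (Mᵀ * L) t)) ∧
    (∀ P : Mat d T, P ∈ OStar L M ↔
      (memO P ∧ ∀ t, blk P t ∈ bOpt (blk (Mᵀ * L) t))) := by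
  classical
  choose q hq using fun t : Fin T => bOpt_nonempty (d := d) (blk (Mᵀ * L) t)
  set P₀ := asm q with hP₀
  have hP₀O : memO P₀ := memO_asm q fun t => (hq t).1
  have hP₀blk : ∀ t, blk P₀ t ∈ bOpt (blk (Mᵀ * L) t) := by
    intro t; rw [hP₀, blk_asm]; exact hq t
  have hFle : ∀ O : Mat d T, memO O → FF L M O ≤ FF L M P₀ := by
    intro O hO
    refine Finset.sum_le_sum fun t _ => ?_
    exact (hP₀blk t).2 _ (memO_blocks hO t)
  have hnn : ∀ O : Mat d T, memO O →
      0 ≤ (frobInner L L + frobInner M M) - 2 * FF L M O := by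
    intro O hO
    rw [← sq_expand L M O hO]
    exact Finset.sum_nonneg fun p _ => Finset.sum_nonneg fun r _ => sq_nonneg _
  have hfrob : ∀ O : Mat d T, memO O → frobNorm (L - M * O)
      = Real.sqrt ((frobInner L L + frobInner M M) - 2 * FF L M O) := by
    intro O hO
    rw [frobNorm, sq_expand L M O hO]
  have hleast : IsLeast {r : ℝ | ∃ O : Mat d T, memO O ∧ r = frobNorm (L - M * O)}
      (frobNorm (L - M * P₀)) := by
    constructor
    · exact ⟨P₀, hP₀O, rfl⟩
    · rintro r ⟨O, hO, rfl⟩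
      rw [hfrob O hO, hfrob P₀ hP₀O]
      exact Real.sqrt_le_sqrt (by linarith [hFle O hO])
  have hd : dABW L M = frobNorm (L - M * P₀) := hleast.csInf_eq
  refine ⟨P₀, ⟨hP₀O, hP₀blk⟩, ?_⟩
  intro P
  constructor
  · rintro ⟨hPO, hPeq⟩
    refine ⟨hPO, ?_⟩
    rw [hd, hfrob P hPO, hfrob P₀ hP₀O] at hPeq
    have hF : FF L M P = FF L M P₀ := by
      have h1 := hnn P hPO
      have h2 := hnn P₀ hP₀O
      have h3 := congrArg (fun x : ℝ => x ^ 2) hPeq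
      simp only [Real.sq_sqrt h1, Real.sq_sqrt h2] at h3
      linarith
    intro t
    have hterm : ∀ s, ((blk P s)ᵀ * blk (Mᵀ * L) s).trace
        ≤ ((blk P₀ s)ᵀ * blk (Mᵀ * L) s).trace :=
      fun s => (hP₀blk s).2 _ (memO_blocks hPO s)
    have hsum0 : ∑ s, (((blk P₀ s)ᵀ * blk (Mᵀ * L) s).trace
        - ((blk P s)ᵀ * blk (Mᵀ * L) s).trace) = 0 := by
      rw [Finset.sum_sub_distrib]
      change FF L M P₀ - FF L M P = 0
      rw [hF]; ring
    have hz := (Finset.sum_eq_zero_iff_of_nonneg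
      (fun s _ => by linarith [hterm s])).mp hsum0 t (Finset.mem_univ t)
    have htreq : ((blk P t)ᵀ * blk (Mᵀ * L) t).trace
        = ((blk P₀ t)ᵀ * blk (Mᵀ * L) t).trace := by linarith
    exact ⟨memO_blocks hPO t, fun Q' hQ' => le_trans ((hP₀blk t).2 Q' hQ') htreq.ge⟩
  · rintro ⟨hPO, hPblk⟩
    refine ⟨hPO, ?_⟩
    rw [hd, hfrob P hPO, hfrob P₀ hP₀O]
    have hF : FF L M P = FF L M P₀ := by
      refine le_antisymm (hFle P hPO) ?_
      refine Finset.sum_le_sum fun t _ => ?_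
      exact (hPblk t).2 _ (memO_blocks hP₀O t)
    rw [hF]

end Stmt13Aux

open Stmt13Aux in
/-- `{M P : P ∈ 𝐎*(L,M)}` is a singleton iff
`rk((MᵀM)_{t,t}) = rk((MᵀL)_{t,t})` for all `t`. -/
theorem stmt13 (d T : ℕ) (hd : 0 < d) (hT : 0 < T) (L M : Mat d T)
    (hL : memL L) (hM : memL M) :
    (∃ X : Mat d T, {Y : Mat d T | ∃ P ∈ OStar L M, Y = M * P} = {X}) ↔
    (∀ t : Fin T, (blk (Mᵀ * M) t).rank = (blk (Mᵀ * L) t).rank) := by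
  classical
  obtain ⟨P₀, ⟨hP₀O, hP₀blk⟩, hchar⟩ := OStar_char L M
  have hmain : (∃ X : Mat d T, {Y : Mat d T | ∃ P ∈ OStar L M, Y = M * P} = {X}) ↔
      (∀ t, ∀ Q ∈ bOpt (blk (Mᵀ * L) t), ∀ Q' ∈ bOpt (blk (Mᵀ * L) t),
        colBlk M t * Q = colBlk M t * Q') := by
    constructor
    · rintro ⟨X, hX⟩ t Q hQ Q' hQ'
      set f : Sq d → (Fin T → Sq d) := fun Q0 s => if s = t then Q0 else blk P₀ s with hf
      have hmem : ∀ Q0, Q0 ∈ bOpt (blk (Mᵀ * L) t) → asm (f Q0) ∈ OStar L M := by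
        intro Q0 hQ0
        rw [hchar]
        constructor
        · apply memO_asm
          intro s
          by_cases hst : s = t
          · subst hst; simp only [hf, if_pos rfl]; exact hQ0.1
          · simp only [hf, if_neg hst]; exact memO_blocks hP₀O s
        · intro s
          rw [blk_asm]
          by_cases hst : s = t
          · subst hst; simpa [hf] using hQ0
          · simp only [hf, if_neg hst]; exact hP₀blk s
      have hXeq : ∀ Q0 (hQ0 : Q0 ∈ bOpt (blk (Mᵀ * L) t)), M * asm (f Q0) = X := by
        intro Q0 hQ0
        have hY : M * asm (f Q0) ∈ {Y : Mat d T | ∃ P ∈ OStar L M, Y = M * P} :=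
          ⟨asm (f Q0), hmem Q0 hQ0, rfl⟩
        rw [hX] at hY
        exact hY
      have h3 : M * asm (f Q) = M * asm (f Q') := (hXeq Q hQ).trans (hXeq Q' hQ').symm
      have h4 := congrArg (fun A : Mat d T => colBlk A t) h3
      rw [colBlk_mul M (asm_offdiag _) t, colBlk_mul M (asm_offdiag _) t,
        blk_asm, blk_asm] at h4
      simpa [hf] using h4
    · intro h
      refine ⟨M * P₀, ?_⟩
      ext Y
      simp only [Set.mem_setOf_eq, Set.mem_singleton_iff]
      constructor
      · rintro ⟨P, hP, rfl⟩
        obtain ⟨hPO, hPblk⟩ := (hchar P).mp hP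
        apply eq_of_colBlk
        intro s
        rw [colBlk_mul M hPO.1 s, colBlk_mul M hP₀O.1 s]
        exact h s _ (hPblk s) _ (hP₀blk s)
      · rintro rfl
        exact ⟨P₀, (hchar P₀).mpr ⟨hP₀O, hP₀blk⟩, rfl⟩
  rw [hmain]
  refine forall_congr' fun t => ?_
  rw [blk_transpose_mul M M t, blk_transpose_mul M L t]
  exact core_iff (colBlk M t) (colBlk L t)
end
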